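/- Let (E, d) be a metric space, β > 0, and u : E → ℝ with β-exponential slope L := L^β_u(E) < ∞ and assume u is bounded below by m. Then for all x, y ∈ E, |u(x) - u(y)| ≤ (L - β·m)·d(x,y). -/
import Mathlib


open Real

theorem beta_slope_lipschitz {E : Type*} [MetricSpace E]
    (β L m : ℝ) (hβ : 0 < β) (u : E → ℝ)
    (hm : ∀ x : E, m ≤ u x)
    (hslope : ∀ x y : E, x ≠ y →
      β * (u y - Real.exp (-β * dist x y) * u x) ≤ L * (1 - Real.exp (-β * dist x y))) :
    ∀ x y : E, |u x - u y| ≤ (L - β * m) * dist x y := by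
  intro x y
  rcases eq_or_ne x y with rfl | hxy
  · simp
  · have hd : 0 < dist x y := dist_pos.mpr hxy
    have h1 := hslope x y hxy
    have h2 := hslope y x hxy.symm
    rw [dist_comm y x] at h2
    set e := Real.exp (-β * dist x y) with he
    have he_pos : 0 < e := Real.exp_pos _
    have he_lt : e < 1 := by
      rw [he]
      apply Real.exp_lt_one_iff.mpr
      nlinarith
    have hle : 1 - e ≤ β * dist x y := by
      have := Real.add_one_le_exp (-β * dist x y)
      nlinarith
    have hmx := hm x
    have hmy := hm y
    -- L ≥ β * m
    have key : β * (u x + u y) ≤ 2 * L := by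
      have h3 : β * (u x + u y) * (1 - e) ≤ 2 * L * (1 - e) := by nlinarith
      exact le_of_mul_le_mul_right h3 (by linarith)
    have hLm : β * m ≤ L := by nlinarith
    rw [abs_sub_le_iff]
    constructor
    · nlinarith [mul_nonneg (sub_nonneg.mpr hmy) (sub_nonneg.mpr he_lt.le)]
    · nlinarith [mul_nonneg (sub_nonneg.mpr hmx) (sub_nonneg.mpr he_lt.le)]
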